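/- Let F = diag(f₁,f₂,f₃) with f₁,f₂,f₃ ≥ 0 and P ∈ SO(3). Write P = exp(hat(y)) with y ∈ R^3 by Rodrigues' formula, and let 𝔠 be the set of cyclic permutations of (1,2,3). Then the error vector e_P = (1/2)(FP − PᵀF)^∨ satisfies ‖e_P‖² = ((1−cos‖y‖)²/(4‖y‖⁴))·Σ_{(i,j,k)∈𝔠}(f_i−f_j)² y_i² y_j² + (sin²‖y‖/(4‖y‖²))·Σ_{(i,j,k)∈𝔠}(f_i+f_j)² y_k². -/

import Mathlib

open Matrix
open scoped Nat

noncomputable def hat (x : Fin 3 → ℝ) : Matrix (Fin 3) (Fin 3) ℝ :=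
  !![0, -x 2, x 1; x 2, 0, -x 0; -x 1, x 0, 0]

noncomputable def vee (A : Matrix (Fin 3) (Fin 3) ℝ) : Fin 3 → ℝ := ![A 2 1, A 0 2, A 1 0]

def IsSO3 (R : Matrix (Fin 3) (Fin 3) ℝ) : Prop := Rᵀ * R = 1 ∧ R.det = 1

noncomputable def enorm3 (x : Fin 3 → ℝ) : ℝ := Real.sqrt (∑ i, x i ^ 2)

attribute [local instance] Matrix.linftyOpNormedRing Matrix.linftyOpNormedAlgebra

lemma hat_cube (y : Fin 3 → ℝ) :
    hat y ^ 3 = (-(y 0 ^ 2 + y 1 ^ 2 + y 2 ^ 2)) • hat y := by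
  ext i j
  fin_cases i <;> fin_cases j <;>
    simp [hat, pow_succ, Matrix.mul_apply, Fin.sum_univ_three] <;> ring

lemma pow_odd_of_cube {c : ℝ} {A : Matrix (Fin 3) (Fin 3) ℝ} (h : A ^ 3 = c • A) (n : ℕ) :
    A ^ (2 * n + 1) = (c ^ n) • A := by
  induction n with
  | zero => simp
  | succ n ih =>
    have : 2 * (n + 1) + 1 = (2 * n + 1) + 3 - 1 := by omega
    calc A ^ (2 * (n + 1) + 1) = A ^ (2 * n + 1) * A ^ 2 := by
          rw [← pow_add]; ring_nf
      _ = (c ^ n) • (A * A ^ 2) := by rw [ih, smul_mul_assoc]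
      _ = (c ^ n) • (A ^ 3) := by rw [← pow_succ']
      _ = (c ^ (n + 1)) • A := by rw [h, smul_smul, pow_succ]

lemma pow_even_of_cube {c : ℝ} {A : Matrix (Fin 3) (Fin 3) ℝ} (h : A ^ 3 = c • A) (n : ℕ) :
    A ^ (2 * (n + 1)) = (c ^ n) • A ^ 2 := by
  have : 2 * (n + 1) = (2 * n + 1) + 1 := by omega
  rw [this, pow_succ, pow_odd_of_cube h, smul_mul_assoc, ← pow_two]

set_option maxHeartbeats 1000000 in
lemma rodrigues (y : Fin 3 → ℝ) (hy : enorm3 y ≠ 0) :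
    NormedSpace.exp (hat y) =
      1 + (Real.sin (enorm3 y) / enorm3 y) • hat y +
        ((1 - Real.cos (enorm3 y)) / enorm3 y ^ 2) • (hat y ^ 2) := by
  set t := enorm3 y with htdef
  have ht2 : t ^ 2 = y 0 ^ 2 + y 1 ^ 2 + y 2 ^ 2 := by
    rw [htdef, enorm3, Real.sq_sqrt (by positivity), Fin.sum_univ_three]
  have hcube : hat y ^ 3 = (-(t ^ 2)) • hat y := by rw [ht2]; exact hat_cube y
  rw [NormedSpace.exp_eq_tsum (𝕂 := ℝ)]
  refine HasSum.tsum_eq ?_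
  have hodd : HasSum (fun n : ℕ => ((2 * n + 1)! : ℝ)⁻¹ • hat y ^ (2 * n + 1))
      ((Real.sin t / t) • hat y) := by
    have := ((Real.hasSum_sin t).div_const t).smul_const (hat y)
    convert this using 2 with n
    rw [pow_odd_of_cube hcube, smul_smul]
    congr 1
    rw [neg_pow]
    have ht' : t ^ (2 * n + 1) = (t ^ 2) ^ n * t := by rw [← pow_mul, ← pow_succ]
    rw [ht']
    field_simp
  have heven : HasSum (fun n : ℕ => ((2 * n)! : ℝ)⁻¹ • hat y ^ (2 * n))
      (1 + ((1 - Real.cos t) / t ^ 2) • (hat y ^ 2)) := by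
    have h1 : HasSum (fun n : ℕ => (-1 : ℝ) ^ n * t ^ (2 * n) / (2 * n)!)
        ((Real.cos t - 1) +
          ∑ i ∈ Finset.range 1, (-1 : ℝ) ^ i * t ^ (2 * i) / (2 * i)!) := by
      simpa using Real.hasSum_cos t
    have hshift := (hasSum_nat_add_iff 1).mpr h1
    have h2 := ((hshift.neg.div_const (t ^ 2)).smul_const (hat y ^ 2))
    rw [neg_sub] at h2
    have h3 : HasSum (fun n : ℕ => ((2 * (n + 1))! : ℝ)⁻¹ • hat y ^ (2 * (n + 1)))
        (((1 - Real.cos t) / t ^ 2) • (hat y ^ 2)) := by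
      convert h2 using 2 with n
      rw [pow_even_of_cube hcube, smul_smul]
      congr 1
      rw [neg_pow]
      have ht : t ^ (2 * (n + 1)) = (t ^ 2) ^ n * t ^ 2 := by
        rw [show 2 * (n + 1) = 2 * n + 2 from by omega, pow_add, pow_mul]
      rw [ht]
      field_simp
      ring
    refine (hasSum_nat_add_iff'
      (f := fun n : ℕ => ((2 * n)! : ℝ)⁻¹ • hat y ^ (2 * n)) 1).mp ?_
    convert h3 using 1
    · rfl
    simp [Finset.range_one]
  have H := HasSum.even_add_odd (f := fun n : ℕ => ((n)! : ℝ)⁻¹ • hat y ^ n) heven hodd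
  convert H using 1
  · rfl
  abel

theorem eP_norm_sq_formula (f₁ f₂ f₃ : ℝ) (hf₁ : 0 ≤ f₁) (hf₂ : 0 ≤ f₂) (hf₃ : 0 ≤ f₃)
    (y : Fin 3 → ℝ) :
    let F : Matrix (Fin 3) (Fin 3) ℝ := Matrix.diagonal ![f₁, f₂, f₃]
    let P := NormedSpace.exp (hat y)
    let eP := (1 / 2 : ℝ) • vee (F * P - Pᵀ * F)
    enorm3 eP ^ 2 =
      ((1 - Real.cos (enorm3 y)) ^ 2 / (4 * enorm3 y ^ 4)) *
        ((f₁ - f₂) ^ 2 * y 0 ^ 2 * y 1 ^ 2 + (f₂ - f₃) ^ 2 * y 1 ^ 2 * y 2 ^ 2 +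
          (f₃ - f₁) ^ 2 * y 2 ^ 2 * y 0 ^ 2) +
      (Real.sin (enorm3 y) ^ 2 / (4 * enorm3 y ^ 2)) *
        ((f₁ + f₂) ^ 2 * y 2 ^ 2 + (f₂ + f₃) ^ 2 * y 0 ^ 2 + (f₃ + f₁) ^ 2 * y 1 ^ 2) := by
  intro F P eP
  have hnorm : ∀ x : Fin 3 → ℝ, enorm3 x ^ 2 = x 0 ^ 2 + x 1 ^ 2 + x 2 ^ 2 := fun x => by
    rw [enorm3, Real.sq_sqrt (by positivity), Fin.sum_univ_three]
  have he0 : eP 0 = (1 / 2) * (f₃ * P 2 1 - P 1 2 * f₂) := by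
    show (1 / 2 : ℝ) • vee (Matrix.diagonal ![f₁, f₂, f₃] * P -
      Pᵀ * Matrix.diagonal ![f₁, f₂, f₃]) 0 = _
    simp [vee, Matrix.sub_apply, Matrix.diagonal_mul, Matrix.mul_diagonal,
      Matrix.transpose_apply]
    try ring
  have he1 : eP 1 = (1 / 2) * (f₁ * P 0 2 - P 2 0 * f₃) := by
    show (1 / 2 : ℝ) • vee (Matrix.diagonal ![f₁, f₂, f₃] * P -
      Pᵀ * Matrix.diagonal ![f₁, f₂, f₃]) 1 = _
    simp [vee, Matrix.sub_apply, Matrix.diagonal_mul, Matrix.mul_diagonal,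
      Matrix.transpose_apply]
    try ring
  have he2 : eP 2 = (1 / 2) * (f₂ * P 1 0 - P 0 1 * f₁) := by
    show (1 / 2 : ℝ) • vee (Matrix.diagonal ![f₁, f₂, f₃] * P -
      Pᵀ * Matrix.diagonal ![f₁, f₂, f₃]) 2 = _
    simp [vee, Matrix.sub_apply, Matrix.diagonal_mul, Matrix.mul_diagonal,
      Matrix.transpose_apply]
    try ring
  by_cases hy : enorm3 y = 0
  · have hsum : y 0 ^ 2 + y 1 ^ 2 + y 2 ^ 2 = 0 := by rw [← hnorm, hy]; ring
    have h0 : y 0 = 0 := by nlinarith [sq_nonneg (y 0), sq_nonneg (y 1), sq_nonneg (y 2)]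
    have h1 : y 1 = 0 := by nlinarith [sq_nonneg (y 0), sq_nonneg (y 1), sq_nonneg (y 2)]
    have h2 : y 2 = 0 := by nlinarith [sq_nonneg (y 0), sq_nonneg (y 1), sq_nonneg (y 2)]
    have hhat : hat y = 0 := by
      ext i j
      fin_cases i <;> fin_cases j <;>
        simp [hat, h0, h1, h2, Matrix.zero_apply, Matrix.vecHead, Matrix.vecTail]
    have hP : P = 1 := by simp [P, hhat, NormedSpace.exp_zero]
    have hone : ∀ i j : Fin 3, i ≠ j → P i j = 0 := by
      intro i j hij; rw [hP]; exact Matrix.one_apply_ne hij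
    rw [hnorm, he0, he1, he2, hone 2 1 (by decide), hone 1 2 (by decide),
      hone 0 2 (by decide), hone 2 0 (by decide), hone 1 0 (by decide),
      hone 0 1 (by decide), hy, h0, h1, h2]
    ring
  · set t := enorm3 y with htdef
    set a := Real.sin t / t with hadef
    set b := (1 - Real.cos t) / t ^ 2 with hbdef
    have hP : P = 1 + a • hat y + b • (hat y * hat y) := by
      show NormedSpace.exp (hat y) = _
      rw [← pow_two]; exact rodrigues y hy
    have hP21 : P 2 1 = a * y 0 + b * (y 1 * y 2) := by
      rw [hP]
      conv_lhs => simp [Matrix.add_apply, Matrix.mul_apply, Matrix.one_apply, hat,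
        Fin.sum_univ_three]
      try ring
    have hP12 : P 1 2 = -(a * y 0) + b * (y 1 * y 2) := by
      rw [hP]
      conv_lhs => simp [Matrix.add_apply, Matrix.mul_apply, Matrix.one_apply, hat,
        Fin.sum_univ_three]
      try ring
    have hP02 : P 0 2 = a * y 1 + b * (y 0 * y 2) := by
      rw [hP]
      conv_lhs => simp [Matrix.add_apply, Matrix.mul_apply, Matrix.one_apply, hat,
        Fin.sum_univ_three]
      try ring
    have hP20 : P 2 0 = -(a * y 1) + b * (y 0 * y 2) := by
      rw [hP]
      conv_lhs => simp [Matrix.add_apply, Matrix.mul_apply, Matrix.one_apply, hat,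
        Fin.sum_univ_three]
      try ring
    have hP10 : P 1 0 = a * y 2 + b * (y 0 * y 1) := by
      rw [hP]
      conv_lhs => simp [Matrix.add_apply, Matrix.mul_apply, Matrix.one_apply, hat,
        Fin.sum_univ_three]
      try ring
    have hP01 : P 0 1 = -(a * y 2) + b * (y 0 * y 1) := by
      rw [hP]
      conv_lhs => simp [Matrix.add_apply, Matrix.mul_apply, Matrix.one_apply, hat,
        Fin.sum_univ_three]
      try ring
    have ht : t ≠ 0 := hy
    have hs : Real.sin t = a * t := (div_mul_cancel₀ _ ht).symm
    have hc : 1 - Real.cos t = b * t ^ 2 := (div_mul_cancel₀ _ (pow_ne_zero 2 ht)).symm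
    rw [hnorm, he0, he1, he2, hP21, hP12, hP02, hP20, hP10, hP01, hs, hc]
    field_simp
    ring
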